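/- Stable decreasing sort counts strictly increasing pairs: Let k_1, …, k_n ∈ ℤ and let π be a permutation of {1, …, n} such that k_{π(1)} ≥ k_{π(2)} ≥ … ≥ k_{π(n)} and such that whenever i < j and k_{π(i)} = k_{π(j)} one has π(i) < π(j). Then inv(π) = |{ (a, b) : 1 ≤ a < b ≤ n and k_a < k_b }|. -/
import Mathlib


/-- A stable decreasing sort counts strictly increasing pairs: if `π` sorts `k` in weakly
decreasing order and is stable (equal values keep their relative order), then the number of
inversions of `π` equals the number of pairs `a < b` with `k a < k b`. -/
theorem stable_sort_inversions (n : ℕ) (k : Fin n → ℤ) (π : Equiv.Perm (Fin n))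
    (hsort : Antitone fun i => k (π i))
    (hstable : ∀ i j : Fin n, i < j → k (π i) = k (π j) → π i < π j) :
    (Finset.univ.filter fun p : Fin n × Fin n => p.1 < p.2 ∧ π p.2 < π p.1).card =
      (Finset.univ.filter fun p : Fin n × Fin n => p.1 < p.2 ∧ k p.1 < k p.2).card := by
  apply Finset.card_bij (fun p _ => (π p.2, π p.1))
  · rintro ⟨i, j⟩ hp
    simp only [Finset.mem_filter, Finset.mem_univ, true_and] at hp ⊢
    obtain ⟨hij, hπ⟩ := hp
    refine ⟨hπ, ?_⟩
    rcases lt_or_eq_of_le (hsort hij.le) with h | h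
    · exact h
    · exact absurd (hstable i j hij h.symm) (not_lt.2 hπ.le)
  · rintro ⟨i, j⟩ _ ⟨i', j'⟩ _ h
    simp only [Prod.mk.injEq, EmbeddingLike.apply_eq_iff_eq] at h
    simp [Prod.ext_iff, h.1, h.2]
  · rintro ⟨a, b⟩ hab
    simp only [Finset.mem_filter, Finset.mem_univ, true_and] at hab
    obtain ⟨hab1, hab2⟩ := hab
    refine ⟨(π.symm b, π.symm a), ?_, ?_⟩
    · simp only [Finset.mem_filter, Finset.mem_univ, true_and]
      constructor
      · by_contra hle
        push_neg at hle
        have := hsort hle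
        simp at this
        omega
      · simpa using hab1
    · simp
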